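/- Let ε = (ε¹₁,ε¹₂,ε²₁,ε²₂) ∈ [0,1/2]⁴. Then the following are equivalent: (a) for every p ∈ [0,1/2]⁴, one has max S₁p ≤ √2/2 if and only if (p, ε) ∈ ELFP; (b) (3 − √2)/2 ∈ S₀ε and max S₁ε ≤ 1/2. (This characterizes the set Equi for the quantum ('quant') constraint.) -/

import Mathlib

open Finset

/-- The signed sum `±(x₁₁−¼) ± (x₁₂−¼) ± (x₂₁−¼) ± (x₂₂−¼)` over the four components of `x`,
with a `+` sign exactly where the sign choice `s` is `true`. -/
noncomputable def Sval (x : Fin 2 → Fin 2 → ℝ) (s : Fin 2 → Fin 2 → Bool) : ℝ :=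
  ∑ i : Fin 2, ∑ j : Fin 2, (if s i j then (1 : ℝ) else -1) * (x i j - 1 / 4)

/-- The number of `+` signs in a sign choice. -/
def plusCount (s : Fin 2 → Fin 2 → Bool) : ℕ :=
  (Finset.univ.filter fun ij : Fin 2 × Fin 2 => s ij.1 ij.2 = true).card

/-- `max Sx`: the maximum of the signed sums over all 16 sign choices. -/
noncomputable def maxS (x : Fin 2 → Fin 2 → ℝ) : ℝ :=
  Finset.univ.sup' Finset.univ_nonempty (Sval x)

/-- `max S₀x`: the maximum over sign choices with an even number of `+` signs. -/
noncomputable def maxS0 (x : Fin 2 → Fin 2 → ℝ) : ℝ :=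
  (Finset.univ.filter fun s : Fin 2 → Fin 2 → Bool => Even (plusCount s)).sup'
    ⟨fun _ _ => false, by decide⟩ (Sval x)

/-- `max S₁x`: the maximum over sign choices with an odd number of `+` signs. -/
noncomputable def maxS1 (x : Fin 2 → Fin 2 → ℝ) : ℝ :=
  (Finset.univ.filter fun s : Fin 2 → Fin 2 → Bool => ¬ Even (plusCount s)).sup'
    ⟨fun i j => i == 0 && j == 0, by decide⟩ (Sval x)

/-- `r ∈ S₀x`: `r` is one of the signed sums with an even number of `+` signs. -/
def memS0 (x : Fin 2 → Fin 2 → ℝ) (r : ℝ) : Prop :=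
  ∃ s : Fin 2 → Fin 2 → Bool, Even (plusCount s) ∧ Sval x s = r

/-- The Extended Linear Feasibility Polytope: `(p, ε) ∈ ELFP` iff there is a joint
distribution on `({−1,+1})⁸` — encoded as `Fin 2 → Fin 2 → Fin 2 → Bool`, `h k i j` being the
value of `Hᵏᵢⱼ` (`true` standing for `+1`) — with uniform ±1 one-dimensional marginals,
`Pr[H¹ᵢⱼ = +1, H²ᵢⱼ = +1] = p i j`, `Pr[H¹ᵢ₁ = +1, H¹ᵢ₂ = +1] = ε 0 i`, and
`Pr[H²₁ⱼ = +1, H²₂ⱼ = +1] = ε 1 j`. -/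
def ELFP (p ε : Fin 2 → Fin 2 → ℝ) : Prop :=
  ∃ μ : (Fin 2 → Fin 2 → Fin 2 → Bool) → ℝ,
    (∀ h, 0 ≤ μ h) ∧
    (∑ h : Fin 2 → Fin 2 → Fin 2 → Bool, μ h = 1) ∧
    (∀ k i j : Fin 2,
      ∑ h ∈ Finset.univ.filter
          (fun h : Fin 2 → Fin 2 → Fin 2 → Bool => h k i j = true), μ h = 1 / 2) ∧
    (∀ i j : Fin 2,
      ∑ h ∈ Finset.univ.filter
          (fun h : Fin 2 → Fin 2 → Fin 2 → Bool => h 0 i j = true ∧ h 1 i j = true), μ h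
        = p i j) ∧
    (∀ i : Fin 2,
      ∑ h ∈ Finset.univ.filter
          (fun h : Fin 2 → Fin 2 → Fin 2 → Bool => h 0 i 0 = true ∧ h 0 i 1 = true), μ h
        = ε 0 i) ∧
    (∀ j : Fin 2,
      ∑ h ∈ Finset.univ.filter
          (fun h : Fin 2 → Fin 2 → Fin 2 → Bool => h 1 0 j = true ∧ h 1 1 j = true), μ h
        = ε 1 j)


-- ===================== auxiliary development =====================
section EquiQuantAux

set_option maxRecDepth 10000

open Finset

private abbrev Cfg := Fin 2 → Fin 2 → Fin 2 → Bool

/- ---------- basic facts about Sval / plusCount / maxS0 / maxS1 ---------- -/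

private lemma Sval_eq (x : Fin 2 → Fin 2 → ℝ) (s : Fin 2 → Fin 2 → Bool) :
    Sval x s = (if s 0 0 then (1:ℝ) else -1) * (x 0 0 - 1/4)
      + (if s 0 1 then (1:ℝ) else -1) * (x 0 1 - 1/4)
      + (if s 1 0 then (1:ℝ) else -1) * (x 1 0 - 1/4)
      + (if s 1 1 then (1:ℝ) else -1) * (x 1 1 - 1/4) := by
  simp only [Sval, Fin.sum_univ_two]; ring

private lemma plusCount_eq (s : Fin 2 → Fin 2 → Bool) :
    plusCount s = (if s 0 0 then 1 else 0) + (if s 0 1 then 1 else 0)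
      + (if s 1 0 then 1 else 0) + (if s 1 1 then 1 else 0) := by
  rw [plusCount, Finset.card_filter, Fintype.sum_prod_type]
  rw [Fin.sum_univ_two, Fin.sum_univ_two, Fin.sum_univ_two]
  ring

private lemma le_maxS1 (x : Fin 2 → Fin 2 → ℝ) (s : Fin 2 → Fin 2 → Bool)
    (h : ¬ Even (plusCount s)) : Sval x s ≤ maxS1 x :=
  Finset.le_sup' (f := Sval x) (Finset.mem_filter.2 ⟨Finset.mem_univ s, h⟩)

private lemma maxS1_le (x : Fin 2 → Fin 2 → ℝ) {c : ℝ}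
    (h : ∀ s, ¬ Even (plusCount s) → Sval x s ≤ c) : maxS1 x ≤ c :=
  Finset.sup'_le _ _ fun s hs => h s (by simpa using hs)

private lemma le_maxS0 (x : Fin 2 → Fin 2 → ℝ) (s : Fin 2 → Fin 2 → Bool)
    (h : Even (plusCount s)) : Sval x s ≤ maxS0 x :=
  Finset.le_sup' (f := Sval x) (Finset.mem_filter.2 ⟨Finset.mem_univ s, h⟩)

private lemma maxS0_le (x : Fin 2 → Fin 2 → ℝ) {c : ℝ}
    (h : ∀ s, Even (plusCount s) → Sval x s ≤ c) : maxS0 x ≤ c :=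
  Finset.sup'_le _ _ fun s hs => h s (by simpa using hs)

private lemma exists_maxS0 (x : Fin 2 → Fin 2 → ℝ) :
    ∃ s, Even (plusCount s) ∧ Sval x s = maxS0 x := by
  obtain ⟨s, hs, h⟩ := Finset.exists_mem_eq_sup'
    (⟨fun _ _ => false, by decide⟩ :
      ((Finset.univ.filter fun s : Fin 2 → Fin 2 → Bool => Even (plusCount s))).Nonempty)
    (Sval x)
  exact ⟨s, by simpa using hs, h.symm⟩

private lemma sqrt2_sq : Real.sqrt 2 * Real.sqrt 2 = 2 := Real.mul_self_sqrt (by norm_num)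
private lemma sqrt2_lt : Real.sqrt 2 < 3/2 := by nlinarith [sqrt2_sq, Real.sqrt_nonneg 2]
private lemma sqrt2_gt : 1 < Real.sqrt 2 := by nlinarith [sqrt2_sq, Real.sqrt_nonneg 2]

/- ---------- the 8-cycle description ---------- -/

private noncomputable def eW (p e : Fin 2 → Fin 2 → ℝ) : Fin 8 → ℝ :=
  ![p 0 0, e 1 0, p 1 0, e 0 1, p 1 1, e 1 1, p 0 1, e 0 0]

private noncomputable def vl (h : Cfg) : Fin 8 → ℝ :=
  ![if h 0 0 0 then 1 else -1, if h 1 0 0 then 1 else -1, if h 1 1 0 then 1 else -1,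
    if h 0 1 0 then 1 else -1, if h 0 1 1 then 1 else -1, if h 1 1 1 then 1 else -1,
    if h 1 0 1 then 1 else -1, if h 0 0 1 then 1 else -1]

private lemma ite_sq (b : Bool) :
    (if b = true then (1:ℝ) else -1) * (if b = true then 1 else -1) = 1 := by
  rcases b <;> norm_num

private lemma vl_sq (h : Cfg) (m : Fin 8) : vl h m * vl h m = 1 := by
  fin_cases m <;> exact ite_sq _

private lemma prod_X (h : Cfg) : ∏ m : Fin 8, (vl h m * vl h (m + 1)) = 1 := by
  rw [Finset.prod_mul_distrib]
  rw [Fintype.prod_equiv (Equiv.addRight (1 : Fin 8)) (fun m => vl h (m + 1)) (vl h)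
    (fun m => rfl)]
  rw [← Finset.prod_mul_distrib]
  exact Finset.prod_eq_one (fun m _ => vl_sq h m)

private lemma prod_sgn (σ : Fin 8 → Bool)
    (hodd : ¬ Even (Finset.univ.filter (fun m => σ m = true)).card) :
    ∏ m : Fin 8, (if σ m then (1:ℝ) else -1) = -1 := by
  rw [← Finset.prod_filter_mul_prod_filter_not Finset.univ (fun m => σ m = true)]
  rw [Finset.prod_congr rfl (fun m hm => if_pos (Finset.mem_filter.1 hm).2),
      Finset.prod_congr rfl (fun m hm => if_neg (by simpa using (Finset.mem_filter.1 hm).2))]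
  rw [Finset.prod_const, Finset.prod_const, one_pow, one_mul]
  have hcard : (Finset.univ.filter (fun m => σ m = true)).card
      + (Finset.univ.filter (fun m => ¬ (σ m = true))).card = 8 := by
    rw [Finset.card_filter_add_card_filter_not]; rfl
  have hoddc : Odd (Finset.univ.filter (fun m => ¬ (σ m = true))).card := by
    rcases Nat.even_or_odd (Finset.univ.filter (fun m => σ m = true)).card with h | h
    · exact absurd h hodd
    · rcases h with ⟨k, hk⟩; exact ⟨3 - k, by omega⟩
  exact Odd.neg_one_pow hoddc

set_option linter.unnecessarySeqFocus false in
private lemma pointwise_bound (h : Cfg) (σ : Fin 8 → Bool)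
    (hodd : ¬ Even (Finset.univ.filter (fun m => σ m = true)).card) :
    ∑ m : Fin 8, (if σ m then (1:ℝ) else -1) * (vl h m * vl h (m + 1)) ≤ 6 := by
  set T : Fin 8 → ℝ := fun m => (if σ m then (1:ℝ) else -1) * (vl h m * vl h (m + 1)) with hT
  have hTval : ∀ m, T m = 1 ∨ T m = -1 := by
    intro m
    have h1 : (if σ m then (1:ℝ) else -1) = 1 ∨ (if σ m then (1:ℝ) else -1) = -1 := by
      rcases σ m <;> simp
    have h2 : vl h m * vl h (m+1) = 1 ∨ vl h m * vl h (m+1) = -1 := by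
      have a := vl_sq h m; have b := vl_sq h (m+1)
      rcases mul_self_eq_one_iff.1 a with ha | ha <;> rcases mul_self_eq_one_iff.1 b with hb | hb <;>
        rw [ha, hb] <;> norm_num
    rcases h1 with h1 | h1 <;> rcases h2 with h2 | h2 <;> rw [hT] <;> simp only [] <;>
      [left; right; right; left] <;> rw [h1, h2] <;> norm_num
  have hprod : ∏ m : Fin 8, T m = -1 := by
    rw [hT, Finset.prod_mul_distrib, prod_X h, prod_sgn σ hodd]; ring
  have hex : ∃ m : Fin 8, T m = -1 := by
    by_contra hc
    push_neg at hc
    have hall : ∀ m : Fin 8, T m = 1 := fun m => (hTval m).resolve_right (hc m)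
    rw [Finset.prod_congr rfl (fun m _ => hall m), Finset.prod_const, one_pow] at hprod
    norm_num at hprod
  obtain ⟨m₀, hm₀⟩ := hex
  have hsplit : ∑ m : Fin 8, T m = T m₀ + ∑ m ∈ Finset.univ.erase m₀, T m := by
    rw [Finset.add_sum_erase _ _ (Finset.mem_univ m₀)]
  rw [hsplit, hm₀]
  have hle : ∑ m ∈ Finset.univ.erase m₀, T m ≤ 7 := by
    have hb := Finset.sum_le_card_nsmul (Finset.univ.erase m₀) T 1
      (fun m _ => by rcases hTval m with h | h <;> rw [h] <;> norm_num)
    have hc : (Finset.univ.erase m₀).card = 7 := by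
      rw [Finset.card_erase_of_mem (Finset.mem_univ m₀)]; rfl
    rw [hc] at hb
    simp only [nsmul_eq_mul, mul_one] at hb
    exact hb
  linarith

private lemma corr_aux (μ : Cfg → ℝ) (a b : Cfg → Bool) (w : ℝ)
    (hab : ∑ h ∈ Finset.univ.filter (fun h : Cfg => a h = true ∧ b h = true), μ h = w)
    (ha : ∑ h ∈ Finset.univ.filter (fun h : Cfg => a h = true), μ h = 1/2)
    (hb : ∑ h ∈ Finset.univ.filter (fun h : Cfg => b h = true), μ h = 1/2)
    (ht : ∑ h : Cfg, μ h = 1) :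
    ∑ h : Cfg, μ h * ((if a h then (1:ℝ) else -1) * (if b h then 1 else -1)) = 4*w - 1 := by
  rw [Finset.sum_filter] at hab ha hb
  have key : ∀ h : Cfg, μ h * ((if a h then (1:ℝ) else -1) * (if b h then 1 else -1))
      = 4*(if a h = true ∧ b h = true then μ h else 0) - 2*(if a h = true then μ h else 0)
        - 2*(if b h = true then μ h else 0) + μ h := by
    intro h; rcases hA : a h <;> rcases hB : b h <;> simp [hA, hB] <;> ring
  rw [Finset.sum_congr rfl (fun h _ => key h)]
  rw [Finset.sum_add_distrib, Finset.sum_sub_distrib, Finset.sum_sub_distrib,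
    ← Finset.mul_sum, ← Finset.mul_sum, ← Finset.mul_sum, hab, ha, hb, ht]
  ring

private lemma corr_aux' (μ : Cfg → ℝ) (a b : Cfg → Bool) (w : ℝ)
    (hab : ∑ h ∈ Finset.univ.filter (fun h : Cfg => a h = true ∧ b h = true), μ h = w)
    (ha : ∑ h ∈ Finset.univ.filter (fun h : Cfg => a h = true), μ h = 1/2)
    (hb : ∑ h ∈ Finset.univ.filter (fun h : Cfg => b h = true), μ h = 1/2)
    (ht : ∑ h : Cfg, μ h = 1) :
    ∑ h : Cfg, μ h * ((if b h then (1:ℝ) else -1) * (if a h then 1 else -1)) = 4*w - 1 := by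
  have e : ∑ h : Cfg, μ h * ((if b h then (1:ℝ) else -1) * (if a h then 1 else -1))
      = ∑ h : Cfg, μ h * ((if a h then (1:ℝ) else -1) * (if b h then 1 else -1)) :=
    Finset.sum_congr rfl (fun h _ => by ring)
  rw [e]; exact corr_aux μ a b w hab ha hb ht

private lemma necessity (p e : Fin 2 → Fin 2 → ℝ) (hE : ELFP p e)
    (σ : Fin 8 → Bool) (hodd : ¬ Even (Finset.univ.filter (fun m => σ m = true)).card) :
    ∑ m : Fin 8, (if σ m then (1:ℝ) else -1) * (eW p e m - 1/4) ≤ 3/2 := by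
  obtain ⟨μ, h0, ht, hs, hp, he0, he1⟩ := hE
  have corr : ∀ m : Fin 8, ∑ h : Cfg, μ h * (vl h m * vl h (m+1)) = 4 * eW p e m - 1 := by
    intro m; fin_cases m
    · exact corr_aux μ (fun h => h 0 0 0) (fun h => h 1 0 0) _ (hp 0 0) (hs 0 0 0) (hs 1 0 0) ht
    · exact corr_aux μ (fun h => h 1 0 0) (fun h => h 1 1 0) _ (he1 0) (hs 1 0 0) (hs 1 1 0) ht
    · exact corr_aux' μ (fun h => h 0 1 0) (fun h => h 1 1 0) _ (hp 1 0) (hs 0 1 0) (hs 1 1 0) ht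
    · exact corr_aux μ (fun h => h 0 1 0) (fun h => h 0 1 1) _ (he0 1) (hs 0 1 0) (hs 0 1 1) ht
    · exact corr_aux μ (fun h => h 0 1 1) (fun h => h 1 1 1) _ (hp 1 1) (hs 0 1 1) (hs 1 1 1) ht
    · exact corr_aux' μ (fun h => h 1 0 1) (fun h => h 1 1 1) _ (he1 1) (hs 1 0 1) (hs 1 1 1) ht
    · exact corr_aux' μ (fun h => h 0 0 1) (fun h => h 1 0 1) _ (hp 0 1) (hs 0 0 1) (hs 1 0 1) ht
    · exact corr_aux' μ (fun h => h 0 0 0) (fun h => h 0 0 1) _ (he0 0) (hs 0 0 0) (hs 0 0 1) ht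
  have key : ∀ m : Fin 8, (if σ m then (1:ℝ) else -1) * (eW p e m - 1/4)
      = (1/4) * ∑ h : Cfg, μ h * ((if σ m then (1:ℝ) else -1) * (vl h m * vl h (m+1))) := by
    intro m
    have e2 : ∑ h : Cfg, μ h * ((if σ m then (1:ℝ) else -1) * (vl h m * vl h (m+1)))
        = (if σ m then (1:ℝ) else -1) * ∑ h : Cfg, μ h * (vl h m * vl h (m+1)) := by
      rw [Finset.mul_sum]; exact Finset.sum_congr rfl (fun h _ => by ring)
    rw [e2, corr m]; ring
  rw [Finset.sum_congr rfl (fun m _ => key m), ← Finset.mul_sum, Finset.sum_comm]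
  have hbd : ∑ h : Cfg, (∑ m : Fin 8, μ h * ((if σ m then (1:ℝ) else -1) * (vl h m * vl h (m+1))))
      ≤ ∑ h : Cfg, μ h * 6 := by
    apply Finset.sum_le_sum
    intro h _
    rw [← Finset.mul_sum]
    exact mul_le_mul_of_nonneg_left (pointwise_bound h σ hodd) (h0 h)
  have h6 : ∑ h : Cfg, μ h * 6 = 6 := by rw [← Finset.sum_mul, ht]; ring
  rw [h6] at hbd
  linarith

/- ---------- the parity polytope ---------- -/

private def evenD (d : Fin 8 → Bool) : Prop :=
  Even ((Finset.univ.filter fun m => d m = true)).card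
private instance : DecidablePred evenD := fun d => by unfold evenD; infer_instance

private lemma claimA (q c : Fin 8 → ℝ) (h0 : ∀ m, 0 ≤ q m) (h1 : ∀ m, q m ≤ 1)
    (hineq : ∀ F : Finset (Fin 8), Odd F.card →
      ∑ m ∈ F, q m - ∑ m ∈ Fᶜ, q m ≤ (F.card : ℝ) - 1) :
    ∃ v : Fin 8 → Bool, evenD v ∧
      ∑ m : Fin 8, c m * q m ≤ ∑ m : Fin 8, c m * (if v m then 1 else 0) := by
  classical
  set P : Finset (Fin 8) := Finset.univ.filter (fun m => 0 < c m) with hPdef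
  by_cases hP : Even P.card
  · refine ⟨fun m => decide (0 < c m), ?_, ?_⟩
    · unfold evenD
      have hfe : (Finset.univ.filter fun m => (decide (0 < c m)) = true) = P := by
        apply Finset.filter_congr; intro m _; simp
      rw [hfe]; exact hP
    · apply Finset.sum_le_sum
      intro m _
      by_cases hm : 0 < c m
      · rw [if_pos (by simpa using hm), mul_one]
        nlinarith [h1 m]
      · rw [if_neg (by simpa using hm), mul_zero]
        push_neg at hm
        exact mul_nonpos_of_nonpos_of_nonneg (by linarith) (h0 m)
  · obtain ⟨i0, _, hmin⟩ := Finset.exists_min_image Finset.univ (fun m => |c m|)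
      ⟨0, Finset.mem_univ 0⟩
    set γ := |c i0| with hγdef
    have hγ0 : 0 ≤ γ := abs_nonneg _
    have hPodd : Odd P.card := Nat.odd_iff.2 (by
      rcases Nat.even_or_odd P.card with h | h
      · exact absurd h hP
      · exact Nat.odd_iff.1 h)
    have hineqP := hineq P hPodd
    have hPc : Pᶜ = Finset.univ.filter (fun m => ¬ 0 < c m) := by
      ext m; simp [hPdef]
    rw [hPc] at hineqP
    set v : Fin 8 → Bool := fun m => xor (decide (0 < c m)) (decide (m = i0)) with hvdef
    have hfilter : (Finset.univ.filter fun m => v m = true)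
        = if i0 ∈ P then P.erase i0 else insert i0 P := by
      ext m
      by_cases hmi : m = i0
      · subst hmi
        by_cases hm : 0 < c m <;>
          simp [hvdef, hm, hPdef, Finset.mem_erase, Finset.mem_insert]
      · by_cases hm : 0 < c m <;>
          by_cases hi : i0 ∈ P <;>
          simp [hvdef, hm, hmi, hi, Finset.mem_erase, Finset.mem_insert] <;> simp [hPdef, hm]
    refine ⟨v, ?_, ?_⟩
    · unfold evenD
      rw [hfilter]
      by_cases hi : i0 ∈ P
      · rw [if_pos hi, Finset.card_erase_of_mem hi]
        rcases hPodd with ⟨k, hk⟩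
        exact ⟨k, by omega⟩
      · rw [if_neg hi, Finset.card_insert_of_notMem hi]
        rcases hPodd with ⟨k, hk⟩
        exact ⟨k + 1, by omega⟩
    · have hsplit : ∑ m ∈ P, c m * q m
          + ∑ m ∈ Finset.univ.filter (fun m => ¬ 0 < c m), c m * q m
          = ∑ m : Fin 8, c m * q m := Finset.sum_filter_add_sum_filter_not _ _ _
      have hB1 : ∑ m ∈ P, c m * q m ≤ ∑ m ∈ P, (c m - γ * (1 - q m)) := by
        apply Finset.sum_le_sum
        intro m hm
        have hcm : 0 < c m := (Finset.mem_filter.1 hm).2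
        have hγm : γ ≤ c m := by
          have h := hmin m (Finset.mem_univ m); rwa [abs_of_pos hcm] at h
        nlinarith [h1 m]
      have hB2 : ∑ m ∈ Finset.univ.filter (fun m => ¬ 0 < c m), c m * q m
          ≤ ∑ m ∈ Finset.univ.filter (fun m => ¬ 0 < c m), (-γ * q m) := by
        apply Finset.sum_le_sum
        intro m hm
        have hcm : ¬ 0 < c m := (Finset.mem_filter.1 hm).2
        push_neg at hcm
        have hγm : γ ≤ -c m := by
          have h := hmin m (Finset.mem_univ m); rwa [abs_of_nonpos hcm] at h
        have := mul_le_mul_of_nonneg_right (show c m ≤ -γ by linarith) (h0 m)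
        linarith
      have hE1 : ∑ m ∈ P, (c m - γ * (1 - q m))
          = ∑ m ∈ P, c m - γ * (P.card : ℝ) + γ * ∑ m ∈ P, q m := by
        rw [Finset.sum_sub_distrib]
        have h2 : ∑ m ∈ P, γ * (1 - q m) = γ * (P.card : ℝ) - γ * ∑ m ∈ P, q m := by
          rw [← Finset.mul_sum, Finset.sum_sub_distrib, Finset.sum_const, nsmul_eq_mul, mul_one,
            mul_sub]
        rw [h2]; ring
      have hE2 : ∑ m ∈ Finset.univ.filter (fun m => ¬ 0 < c m), (-γ * q m)
          = -(γ * ∑ m ∈ Finset.univ.filter (fun m => ¬ 0 < c m), q m) := by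
        rw [← Finset.mul_sum]; ring
      have hRHS : ∑ m : Fin 8, c m * (if v m then 1 else 0) = ∑ m ∈ P, c m - γ := by
        have hsf : ∑ m : Fin 8, c m * (if v m then 1 else 0)
            = ∑ m ∈ (Finset.univ.filter fun m => v m = true), c m := by
          rw [Finset.sum_filter]
          apply Finset.sum_congr rfl
          intro m _
          by_cases hv : v m = true
          · rw [if_pos hv, if_pos hv, mul_one]
          · rw [if_neg hv, if_neg hv, mul_zero]
        rw [hsf, hfilter]
        by_cases hi : i0 ∈ P
        · rw [if_pos hi, Finset.sum_erase_eq_sub hi]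
          have he : γ = c i0 := abs_of_pos ((Finset.mem_filter.1 hi).2)
          rw [he]
        · rw [if_neg hi, Finset.sum_insert hi]
          have hc0 : c i0 ≤ 0 := by
            by_contra hh; push_neg at hh
            exact hi (Finset.mem_filter.2 ⟨Finset.mem_univ _, hh⟩)
          have he : γ = - c i0 := abs_of_nonpos hc0
          rw [he]; ring
      have hkey : γ * 1 ≤ γ * ((P.card : ℝ) - ∑ m ∈ P, q m
          + ∑ m ∈ Finset.univ.filter (fun m => ¬ 0 < c m), q m) :=
        mul_le_mul_of_nonneg_left (by linarith) hγ0
      rw [hRHS]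
      linarith

private def toR (d : Fin 8 → Bool) : Fin 8 → ℝ := fun m => if d m then 1 else 0

private lemma toR_inj : Function.Injective toR := by
  intro d d' h
  funext m
  have := congrFun h m
  unfold toR at this
  rcases hd : d m <;> rcases hd' : d' m <;> rw [hd, hd'] at this <;> first | rfl | norm_num at this

private lemma parity_rep (q : Fin 8 → ℝ) (h0 : ∀ m, 0 ≤ q m) (h1 : ∀ m, q m ≤ 1)
    (hineq : ∀ F : Finset (Fin 8), Odd F.card →
      ∑ m ∈ F, q m - ∑ m ∈ Fᶜ, q m ≤ (F.card : ℝ) - 1) :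
    ∃ lam : (Fin 8 → Bool) → ℝ, (∀ d, 0 ≤ lam d) ∧ (∑ d : Fin 8 → Bool, lam d = 1)
      ∧ (∀ d, ¬ evenD d → lam d = 0)
      ∧ (∀ m, ∑ d : Fin 8 → Bool, lam d * (if d m then 1 else 0) = q m) := by
  classical
  set T : Finset (Fin 8 → ℝ) := (Finset.univ.filter evenD).image toR with hTdef
  have hq : q ∈ convexHull ℝ (T : Set (Fin 8 → ℝ)) := by
    by_contra hq
    obtain ⟨f, u, hfq, hfb⟩ := geometric_hahn_banach_point_closed
      (convex_convexHull ℝ (T : Set (Fin 8 → ℝ))) (T.finite_toSet.isClosed_convexHull (𝕜 := ℝ)) hq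
    set c : Fin 8 → ℝ := fun m => - f (fun j => if m = j then 1 else 0) with hcdef
    have hf : ∀ y : Fin 8 → ℝ, f y = - ∑ m : Fin 8, c m * y m := by
      intro y
      have hrep : y = ∑ m : Fin 8, y m • (fun j => if m = j then (1:ℝ) else 0) :=
        pi_eq_sum_univ y
      calc f y = f (∑ m : Fin 8, y m • (fun j => if m = j then (1:ℝ) else 0)) := by rw [← hrep]
        _ = ∑ m : Fin 8, y m • f (fun j => if m = j then (1:ℝ) else 0) := by
            rw [map_sum]
            exact Finset.sum_congr rfl fun m _ => map_smul f _ _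
        _ = - ∑ m : Fin 8, c m * y m := by
            rw [← Finset.sum_neg_distrib]
            apply Finset.sum_congr rfl
            intro m _
            simp only [hcdef, smul_eq_mul]
            ring
    obtain ⟨v, hve, hvle⟩ := claimA q c h0 h1 hineq
    have hTv : toR v ∈ (T : Set (Fin 8 → ℝ)) := by
      simp only [hTdef, Finset.coe_image, Set.mem_image]
      exact ⟨v, by simp [hve], rfl⟩
    have hgt := hfb _ (subset_convexHull ℝ _ hTv)
    have hle : f (toR v) ≤ f q := by
      rw [hf, hf]
      apply neg_le_neg
      unfold toR
      exact hvle
    linarith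
  rw [Finset.convexHull_eq] at hq
  obtain ⟨w, hw0, hw1, hcm⟩ := hq
  have hcm' : ∑ y ∈ T, w y • y = q := by
    rw [Finset.centerMass_eq_of_sum_1 _ _ hw1] at hcm
    simpa only [id] using hcm
  refine ⟨fun d => if evenD d then w (toR d) else 0, ?_, ?_, ?_, ?_⟩
  · intro d
    dsimp only
    by_cases hd : evenD d
    · rw [if_pos hd]
      exact hw0 _ (Finset.mem_image_of_mem toR (Finset.mem_filter.2 ⟨Finset.mem_univ _, hd⟩))
    · rw [if_neg hd]
  · rw [← Finset.sum_filter, ← hw1, hTdef]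
    exact (Finset.sum_image (fun d _ d' _ h => toR_inj h)).symm
  · intro d hd; dsimp only; rw [if_neg hd]
  · intro m
    have hpt : ∀ d : Fin 8 → Bool,
        (if evenD d then w (toR d) else 0) * (if d m then 1 else 0)
        = if evenD d then w (toR d) * toR d m else 0 := by
      intro d
      by_cases hd : evenD d
      · rw [if_pos hd, if_pos hd]; rfl
      · rw [if_neg hd, if_neg hd, zero_mul]
    rw [Finset.sum_congr rfl (fun d _ => hpt d), ← Finset.sum_filter]
    have himg : ∑ y ∈ T, w y * y m = ∑ d ∈ Finset.univ.filter evenD, w (toR d) * toR d m := by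
      rw [hTdef]
      exact Finset.sum_image (f := fun y => w y * y m) (fun d _ d' _ h => toR_inj h)
    rw [← himg]
    have := congrFun hcm' m
    rw [Finset.sum_apply] at this
    simpa using this

/- ---------- construction of the distribution ---------- -/

private def pfxX (d : Fin 8 → Bool) : Fin 8 → Bool :=
  ![false, d 0, xor (d 0) (d 1), xor (xor (d 0) (d 1)) (d 2),
    xor (xor (xor (d 0) (d 1)) (d 2)) (d 3),
    xor (xor (xor (xor (d 0) (d 1)) (d 2)) (d 3)) (d 4),
    xor (xor (xor (xor (xor (d 0) (d 1)) (d 2)) (d 3)) (d 4)) (d 5),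
    xor (xor (xor (xor (xor (xor (d 0) (d 1)) (d 2)) (d 3)) (d 4)) (d 5)) (d 6)]

private def idx : Fin 2 → Fin 2 → Fin 2 → Fin 8 :=
  fun k i j => ![![![0,7],![3,4]], ![![1,6],![2,5]]] k i j

private def Psi (d : Fin 8 → Bool) (g : Bool) : Cfg := fun k i j => xor g (pfxX d (idx k i j))

private lemma edge01 : ∀ d : Fin 8 → Bool, evenD d → (pfxX d 0 = pfxX d 1 ↔ d 0 = false) := by
  decide
private lemma edge76 : ∀ d : Fin 8 → Bool, evenD d → (pfxX d 7 = pfxX d 6 ↔ d 6 = false) := by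
  decide
private lemma edge32 : ∀ d : Fin 8 → Bool, evenD d → (pfxX d 3 = pfxX d 2 ↔ d 2 = false) := by
  decide
private lemma edge45 : ∀ d : Fin 8 → Bool, evenD d → (pfxX d 4 = pfxX d 5 ↔ d 4 = false) := by
  decide
private lemma edge07 : ∀ d : Fin 8 → Bool, evenD d → (pfxX d 0 = pfxX d 7 ↔ d 7 = false) := by
  decide
private lemma edge34 : ∀ d : Fin 8 → Bool, evenD d → (pfxX d 3 = pfxX d 4 ↔ d 3 = false) := by
  decide
private lemma edge12 : ∀ d : Fin 8 → Bool, evenD d → (pfxX d 1 = pfxX d 2 ↔ d 1 = false) := by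
  decide
private lemma edge65 : ∀ d : Fin 8 → Bool, evenD d → (pfxX d 6 = pfxX d 5 ↔ d 5 = false) := by
  decide

private lemma ite_eq_helper (P : Cfg → Prop) [DecidablePred P] (c : Cfg) (E : Prop) [Decidable E]
    (x : ℝ) (h : Cfg) :
    (if P h then (if h = c ∧ E then x else 0) else 0)
      = if h = c then (if E ∧ P c then x else 0) else 0 := by
  by_cases hc : h = c
  · subst hc
    by_cases hE : E <;> by_cases hP : P h <;> simp [hE, hP]
  · simp [hc]

private lemma musum (lam : (Fin 8 → Bool) → ℝ) (P : Cfg → Prop) [DecidablePred P] :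
    ∑ h ∈ Finset.univ.filter P,
        (∑ dg : (Fin 8 → Bool) × Bool, if h = Psi dg.1 dg.2 ∧ evenD dg.1 then lam dg.1 / 2 else 0)
      = ∑ dg : (Fin 8 → Bool) × Bool,
          (if evenD dg.1 ∧ P (Psi dg.1 dg.2) then lam dg.1 / 2 else 0) := by
  rw [Finset.sum_comm]
  apply Finset.sum_congr rfl
  intro dg _
  rw [Finset.sum_filter]
  rw [Finset.sum_congr rfl
    (fun h _ => ite_eq_helper P (Psi dg.1 dg.2) (evenD dg.1) (lam dg.1 / 2) h)]
  rw [Finset.sum_ite_eq' Finset.univ (Psi dg.1 dg.2)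
    (fun _ => if evenD dg.1 ∧ P (Psi dg.1 dg.2) then lam dg.1 / 2 else 0)]
  exact if_pos (Finset.mem_univ _)

private lemma hE1 (lam : (Fin 8 → Bool) → ℝ) (hsupp : ∀ d, ¬ evenD d → lam d = 0)
    (htot : ∑ d : Fin 8 → Bool, lam d = 1) :
    ∑ d : Fin 8 → Bool, (if evenD d then lam d / 2 else 0) = 1/2 := by
  have hpt : ∀ d, (if evenD d then lam d / 2 else 0) = lam d / 2 := by
    intro d
    by_cases hd : evenD d
    · rw [if_pos hd]
    · rw [if_neg hd, hsupp d hd]; norm_num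
  rw [Finset.sum_congr rfl (fun d _ => hpt d), ← Finset.sum_div, htot]

private lemma single_core (lam : (Fin 8 → Bool) → ℝ) (hsupp : ∀ d, ¬ evenD d → lam d = 0)
    (htot : ∑ d : Fin 8 → Bool, lam d = 1) (n : Fin 8) :
    ∑ dg : (Fin 8 → Bool) × Bool,
      (if evenD dg.1 ∧ xor dg.2 (pfxX dg.1 n) = true then lam dg.1 / 2 else 0) = 1/2 := by
  rw [Fintype.sum_prod_type]
  have hg : ∀ d : Fin 8 → Bool,
      ∑ g : Bool, (if evenD d ∧ xor g (pfxX d n) = true then lam d / 2 else 0)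
        = if evenD d then lam d / 2 else 0 := by
    intro d
    rw [Fintype.sum_bool]
    rcases hb : pfxX d n <;> by_cases hE : evenD d <;> simp [hb, hE]
  rw [Finset.sum_congr rfl (fun d _ => hg d)]
  exact hE1 lam hsupp htot

private lemma pair_core (lam : (Fin 8 → Bool) → ℝ) (hsupp : ∀ d, ¬ evenD d → lam d = 0)
    (htot : ∑ d : Fin 8 → Bool, lam d = 1) (n1 n2 m : Fin 8) (qm w : ℝ)
    (hed : ∀ d, evenD d → (pfxX d n1 = pfxX d n2 ↔ d m = false))
    (hmarg : ∑ d : Fin 8 → Bool, lam d * (if d m then 1 else 0) = qm)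
    (hval : 1/2 - qm/2 = w) :
    ∑ dg : (Fin 8 → Bool) × Bool,
      (if evenD dg.1 ∧ (xor dg.2 (pfxX dg.1 n1) = true ∧ xor dg.2 (pfxX dg.1 n2) = true)
        then lam dg.1 / 2 else 0) = w := by
  rw [Fintype.sum_prod_type]
  have hg : ∀ d : Fin 8 → Bool,
      ∑ g : Bool, (if evenD d ∧ (xor g (pfxX d n1) = true ∧ xor g (pfxX d n2) = true)
          then lam d / 2 else 0)
        = if evenD d ∧ d m = false then lam d / 2 else 0 := by
    intro d
    rw [Fintype.sum_bool]
    by_cases hE : evenD d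
    · rcases hb1 : pfxX d n1 <;> rcases hb2 : pfxX d n2
      · have hdm : d m = false := (hed d hE).1 (by rw [hb1, hb2])
        simp [hb1, hb2, hE, hdm]
      · have hdm : d m = true := by
          rcases hdm2 : d m
          · exfalso
            have h2 := (hed d hE).2 hdm2
            rw [hb1, hb2] at h2
            exact Bool.false_ne_true h2
          · rfl
        simp [hb1, hb2, hE, hdm]
      · have hdm : d m = true := by
          rcases hdm2 : d m
          · exfalso
            have h2 := (hed d hE).2 hdm2
            rw [hb1, hb2] at h2
            exact Bool.false_ne_true h2.symm
          · rfl
        simp [hb1, hb2, hE, hdm]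
      · have hdm : d m = false := (hed d hE).1 (by rw [hb1, hb2])
        simp [hb1, hb2, hE, hdm]
    · simp [hE]
  rw [Finset.sum_congr rfl (fun d _ => hg d)]
  have hpt : ∀ d, (if evenD d ∧ d m = false then lam d / 2 else 0)
      = (if evenD d then lam d / 2 else 0) - (lam d * (if d m then 1 else 0))/2 := by
    intro d
    by_cases hE : evenD d
    · rcases hdm : d m <;> simp [hE, hdm]
    · simp [hE, hsupp d hE]
  rw [Finset.sum_congr rfl (fun d _ => hpt d), Finset.sum_sub_distrib, hE1 lam hsupp htot,
    ← Finset.sum_div, hmarg]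
  exact hval

private lemma sufficiency (p e : Fin 2 → Fin 2 → ℝ)
    (hbp : ∀ i j, p i j ∈ Set.Icc (0:ℝ) (1/2)) (hbe : ∀ k i, e k i ∈ Set.Icc (0:ℝ) (1/2))
    (hcyc : ∀ σ : Fin 8 → Bool, ¬ Even ((Finset.univ.filter fun m => σ m = true)).card →
      ∑ m : Fin 8, (if σ m then (1:ℝ) else -1) * (eW p e m - 1/4) ≤ 3/2) :
    ELFP p e := by
  classical
  have hbw : ∀ m, 0 ≤ eW p e m ∧ eW p e m ≤ 1/2 := by
    intro m; fin_cases m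
    · exact ⟨(hbp 0 0).1, (hbp 0 0).2⟩
    · exact ⟨(hbe 1 0).1, (hbe 1 0).2⟩
    · exact ⟨(hbp 1 0).1, (hbp 1 0).2⟩
    · exact ⟨(hbe 0 1).1, (hbe 0 1).2⟩
    · exact ⟨(hbp 1 1).1, (hbp 1 1).2⟩
    · exact ⟨(hbe 1 1).1, (hbe 1 1).2⟩
    · exact ⟨(hbp 0 1).1, (hbp 0 1).2⟩
    · exact ⟨(hbe 0 0).1, (hbe 0 0).2⟩
  set q : Fin 8 → ℝ := fun m => 1 - 2 * eW p e m with hqdef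
  have h0q : ∀ m, 0 ≤ q m := fun m => by
    have := (hbw m).2; rw [hqdef]; dsimp only; linarith
  have h1q : ∀ m, q m ≤ 1 := fun m => by
    have := (hbw m).1; rw [hqdef]; dsimp only; linarith
  have hineq : ∀ F : Finset (Fin 8), Odd F.card →
      ∑ m ∈ F, q m - ∑ m ∈ Fᶜ, q m ≤ (F.card : ℝ) - 1 := by
    intro F hF
    set σ : Fin 8 → Bool := fun m => decide (m ∉ F) with hσdef
    have hfσ : (Finset.univ.filter fun m => σ m = true) = Fᶜ := by
      ext m; simp [hσdef]
    have hcardc : Fᶜ.card = 8 - F.card := by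
      rw [Finset.card_compl]; rfl
    have hFle : F.card ≤ 8 := by
      have := Finset.card_le_univ F; simpa using this
    have hodd : ¬ Even ((Finset.univ.filter fun m => σ m = true)).card := by
      rw [hfσ, hcardc]
      rcases hF with ⟨k, hk⟩
      intro hcon
      rcases hcon with ⟨l, hl⟩
      omega
    have hS := hcyc σ hodd
    have hsplit : ∑ m : Fin 8, (if σ m then (1:ℝ) else -1) * (eW p e m - 1/4)
        = ∑ m ∈ Fᶜ, (eW p e m - 1/4) - ∑ m ∈ F, (eW p e m - 1/4) := by
      rw [← Finset.sum_filter_add_sum_filter_not Finset.univ (fun m => m ∈ F)]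
      have hfin : Finset.univ.filter (fun m : Fin 8 => m ∈ F) = F := by
        ext m; simp
      have hfout : Finset.univ.filter (fun m : Fin 8 => ¬ m ∈ F) = Fᶜ := by
        ext m; simp
      have e1 : ∑ m ∈ Finset.univ.filter (fun m : Fin 8 => m ∈ F),
          (if σ m then (1:ℝ) else -1) * (eW p e m - 1/4)
          = ∑ m ∈ F, -(eW p e m - 1/4) := by
        rw [hfin]
        apply Finset.sum_congr rfl
        intro m hm
        rw [if_neg (by simp [hσdef, hm])]
        ring
      have e2 : ∑ m ∈ Finset.univ.filter (fun m : Fin 8 => ¬ m ∈ F),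
          (if σ m then (1:ℝ) else -1) * (eW p e m - 1/4)
          = ∑ m ∈ Fᶜ, (eW p e m - 1/4) := by
        rw [hfout]
        apply Finset.sum_congr rfl
        intro m hm
        rw [Finset.mem_compl] at hm
        rw [if_pos (by simp [hσdef, hm])]
        ring
      rw [e1, e2, Finset.sum_neg_distrib]
      ring
    rw [hsplit] at hS
    have hqF : ∑ m ∈ F, q m = (F.card : ℝ) - 2 * ∑ m ∈ F, eW p e m := by
      rw [hqdef]
      dsimp only
      rw [Finset.sum_sub_distrib, Finset.sum_const, nsmul_eq_mul, mul_one, ← Finset.mul_sum]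
    have hqFc : ∑ m ∈ Fᶜ, q m = ((8 - F.card : ℕ) : ℝ) - 2 * ∑ m ∈ Fᶜ, eW p e m := by
      rw [hqdef]
      dsimp only
      rw [Finset.sum_sub_distrib, Finset.sum_const, nsmul_eq_mul, mul_one, ← Finset.mul_sum,
        hcardc]
    have hEF : ∑ m ∈ F, (eW p e m - 1/4) = ∑ m ∈ F, eW p e m - (F.card : ℝ)/4 := by
      rw [Finset.sum_sub_distrib, Finset.sum_const, nsmul_eq_mul]
      ring
    have hEFc : ∑ m ∈ Fᶜ, (eW p e m - 1/4)
        = ∑ m ∈ Fᶜ, eW p e m - ((8 - F.card : ℕ) : ℝ)/4 := by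
      rw [Finset.sum_sub_distrib, Finset.sum_const, nsmul_eq_mul, hcardc]
      ring
    have hcast : ((8 - F.card : ℕ) : ℝ) = 8 - (F.card : ℝ) := by
      push_cast [hFle]
      ring
    rw [hEF, hEFc, hcast] at hS
    rw [hqF, hqFc, hcast]
    linarith
  obtain ⟨lam, hl0, hl1, hlsupp, hlmarg⟩ := parity_rep q h0q h1q hineq
  refine ⟨fun h => ∑ dg : (Fin 8 → Bool) × Bool,
      if h = Psi dg.1 dg.2 ∧ evenD dg.1 then lam dg.1 / 2 else 0, ?_, ?_, ?_, ?_, ?_, ?_⟩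
  · intro h
    apply Finset.sum_nonneg
    intro dg _
    split_ifs with hcond
    · exact div_nonneg (hl0 _) (by norm_num)
    · exact le_refl 0
  · have h2 := musum lam (fun _ => True)
    rw [Finset.filter_true] at h2
    rw [h2]
    have h3 : ∀ dg : (Fin 8 → Bool) × Bool,
        (if evenD dg.1 ∧ True then lam dg.1 / 2 else 0)
          = (if evenD dg.1 then lam dg.1 / 2 else 0) := by
      intro dg; simp
    rw [Finset.sum_congr rfl (fun dg _ => h3 dg), Fintype.sum_prod_type]
    have h4 : ∀ d : Fin 8 → Bool,
        ∑ _g : Bool, (if evenD d then lam d / 2 else 0) = (if evenD d then lam d else 0) := by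
      intro d
      rw [Fintype.sum_bool]
      split_ifs <;> ring
    rw [Finset.sum_congr rfl (fun d _ => h4 d)]
    have h5 : ∀ d, (if evenD d then lam d else 0) = lam d := by
      intro d
      by_cases hd : evenD d
      · rw [if_pos hd]
      · rw [if_neg hd, hlsupp d hd]
    rw [Finset.sum_congr rfl (fun d _ => h5 d)]
    exact hl1
  · intro k i j
    rw [musum lam (fun h : Cfg => h k i j = true)]
    exact single_core lam hlsupp hl1 (idx k i j)
  · intro i j
    rw [musum lam (fun h : Cfg => h 0 i j = true ∧ h 1 i j = true)]
    fin_cases i <;> fin_cases j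
    · exact pair_core lam hlsupp hl1 0 1 0 (q 0) (p 0 0) edge01 (hlmarg 0)
        (by rw [hqdef]; show 1/2 - (1 - 2 * p 0 0)/2 = p 0 0; ring)
    · exact pair_core lam hlsupp hl1 7 6 6 (q 6) (p 0 1) edge76 (hlmarg 6)
        (by rw [hqdef]; show 1/2 - (1 - 2 * p 0 1)/2 = p 0 1; ring)
    · exact pair_core lam hlsupp hl1 3 2 2 (q 2) (p 1 0) edge32 (hlmarg 2)
        (by rw [hqdef]; show 1/2 - (1 - 2 * p 1 0)/2 = p 1 0; ring)
    · exact pair_core lam hlsupp hl1 4 5 4 (q 4) (p 1 1) edge45 (hlmarg 4)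
        (by rw [hqdef]; show 1/2 - (1 - 2 * p 1 1)/2 = p 1 1; ring)
  · intro i
    rw [musum lam (fun h : Cfg => h 0 i 0 = true ∧ h 0 i 1 = true)]
    fin_cases i
    · exact pair_core lam hlsupp hl1 0 7 7 (q 7) (e 0 0) edge07 (hlmarg 7)
        (by rw [hqdef]; show 1/2 - (1 - 2 * e 0 0)/2 = e 0 0; ring)
    · exact pair_core lam hlsupp hl1 3 4 3 (q 3) (e 0 1) edge34 (hlmarg 3)
        (by rw [hqdef]; show 1/2 - (1 - 2 * e 0 1)/2 = e 0 1; ring)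
  · intro j
    rw [musum lam (fun h : Cfg => h 1 0 j = true ∧ h 1 1 j = true)]
    fin_cases j
    · exact pair_core lam hlsupp hl1 1 2 1 (q 1) (e 1 0) edge12 (hlmarg 1)
        (by rw [hqdef]; show 1/2 - (1 - 2 * e 1 0)/2 = e 1 0; ring)
    · exact pair_core lam hlsupp hl1 6 5 5 (q 5) (e 1 1) edge65 (hlmarg 5)
        (by rw [hqdef]; show 1/2 - (1 - 2 * e 1 1)/2 = e 1 1; ring)

/- ---------- bridge between (s,t) and σ forms ---------- -/

private def sigOf (s t : Fin 2 → Fin 2 → Bool) : Fin 8 → Bool :=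
  ![s 0 0, t 1 0, s 1 0, t 0 1, s 1 1, t 1 1, s 0 1, t 0 0]

private def sOf (σ : Fin 8 → Bool) : Fin 2 → Fin 2 → Bool := fun i j => σ (![![0,6],![2,4]] i j)
private def tOf (σ : Fin 8 → Bool) : Fin 2 → Fin 2 → Bool := fun k i => σ (![![7,3],![1,5]] k i)

private lemma sig_of_of (σ : Fin 8 → Bool) : sigOf (sOf σ) (tOf σ) = σ := by
  funext m; fin_cases m <;> rfl

private lemma sum_sig (p e : Fin 2 → Fin 2 → ℝ) (s t : Fin 2 → Fin 2 → Bool) :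
    ∑ m : Fin 8, (if sigOf s t m then (1:ℝ) else -1) * (eW p e m - 1/4)
      = Sval p s + Sval e t := by
  rw [Fin.sum_univ_eight, Sval_eq, Sval_eq]
  rw [show sigOf s t 0 = s 0 0 from rfl, show sigOf s t 1 = t 1 0 from rfl,
    show sigOf s t 2 = s 1 0 from rfl, show sigOf s t 3 = t 0 1 from rfl,
    show sigOf s t 4 = s 1 1 from rfl, show sigOf s t 5 = t 1 1 from rfl,
    show sigOf s t 6 = s 0 1 from rfl, show sigOf s t 7 = t 0 0 from rfl,
    show eW p e 0 = p 0 0 from rfl, show eW p e 1 = e 1 0 from rfl,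
    show eW p e 2 = p 1 0 from rfl, show eW p e 3 = e 0 1 from rfl,
    show eW p e 4 = p 1 1 from rfl, show eW p e 5 = e 1 1 from rfl,
    show eW p e 6 = p 0 1 from rfl, show eW p e 7 = e 0 0 from rfl]
  ring

private lemma card_sig (s t : Fin 2 → Fin 2 → Bool) :
    ((Finset.univ.filter fun m => sigOf s t m = true)).card = plusCount s + plusCount t := by
  rw [Finset.card_filter, Fin.sum_univ_eight, plusCount_eq, plusCount_eq]
  rw [show sigOf s t 0 = s 0 0 from rfl, show sigOf s t 1 = t 1 0 from rfl,
    show sigOf s t 2 = s 1 0 from rfl, show sigOf s t 3 = t 0 1 from rfl,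
    show sigOf s t 4 = s 1 1 from rfl, show sigOf s t 5 = t 1 1 from rfl,
    show sigOf s t 6 = s 0 1 from rfl, show sigOf s t 7 = t 0 0 from rfl]
  ring

private lemma key_iff (p e : Fin 2 → Fin 2 → ℝ)
    (hbp : ∀ i j, p i j ∈ Set.Icc (0:ℝ) (1/2)) (hbe : ∀ k i, e k i ∈ Set.Icc (0:ℝ) (1/2)) :
    ELFP p e ↔ ∀ s t : Fin 2 → Fin 2 → Bool,
      ¬ Even (plusCount s + plusCount t) → Sval p s + Sval e t ≤ 3/2 := by
  constructor
  · intro hE s t hodd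
    have h := necessity p e hE (sigOf s t) (by rw [card_sig]; exact hodd)
    rwa [sum_sig] at h
  · intro hC
    apply sufficiency p e hbp hbe
    intro σ hodd
    have hps : ¬ Even (plusCount (sOf σ) + plusCount (tOf σ)) := by
      rw [← card_sig (sOf σ) (tOf σ), sig_of_of]; exact hodd
    have h := hC (sOf σ) (tOf σ) hps
    rw [← sum_sig p e (sOf σ) (tOf σ), sig_of_of σ] at h
    exact h

/- ---------- small front-end lemmas ---------- -/

private lemma parity_split {a b : ℕ} (h : ¬ Even (a + b)) :
    (Even a ∧ ¬ Even b) ∨ (¬ Even a ∧ Even b) := by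
  by_cases ha : Even a <;> by_cases hb : Even b
  · exact absurd (Nat.even_add.2 (iff_of_true ha hb)) h
  · exact Or.inl ⟨ha, hb⟩
  · exact Or.inr ⟨ha, hb⟩
  · exact absurd (Nat.even_add.2 (iff_of_false ha hb)) h

private def flipAt (s : Fin 2 → Fin 2 → Bool) (i0 j0 : Fin 2) : Fin 2 → Fin 2 → Bool :=
  fun i j => if i = i0 ∧ j = j0 then !(s i j) else s i j

private lemma parity_flip : ∀ (s : Fin 2 → Fin 2 → Bool) (i0 j0 : Fin 2),
    Even (plusCount s) → ¬ Even (plusCount (flipAt s i0 j0)) := by decide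

private lemma ite_not_sgn (b : Bool) :
    (if (!b) = true then (1:ℝ) else -1) = -(if b = true then 1 else -1) := by
  rcases b <;> norm_num

private lemma sval_flip (x : Fin 2 → Fin 2 → ℝ) (s : Fin 2 → Fin 2 → Bool) (i0 j0 : Fin 2) :
    Sval x (flipAt s i0 j0)
      = Sval x s - 2 * ((if s i0 j0 then (1:ℝ) else -1) * (x i0 j0 - 1/4)) := by
  fin_cases i0 <;> fin_cases j0 <;> simp only [Fin.mk_zero, Fin.mk_one] <;> rw [Sval_eq, Sval_eq]
  · rw [show flipAt s 0 0 0 0 = !(s 0 0) from rfl, show flipAt s 0 0 0 1 = s 0 1 from rfl,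
      show flipAt s 0 0 1 0 = s 1 0 from rfl, show flipAt s 0 0 1 1 = s 1 1 from rfl]
    rw [ite_not_sgn]; ring
  · rw [show flipAt s 0 1 0 0 = s 0 0 from rfl, show flipAt s 0 1 0 1 = !(s 0 1) from rfl,
      show flipAt s 0 1 1 0 = s 1 0 from rfl, show flipAt s 0 1 1 1 = s 1 1 from rfl]
    rw [ite_not_sgn]; ring
  · rw [show flipAt s 1 0 0 0 = s 0 0 from rfl, show flipAt s 1 0 0 1 = s 0 1 from rfl,
      show flipAt s 1 0 1 0 = !(s 1 0) from rfl, show flipAt s 1 0 1 1 = s 1 1 from rfl]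
    rw [ite_not_sgn]; ring
  · rw [show flipAt s 1 1 0 0 = s 0 0 from rfl, show flipAt s 1 1 0 1 = s 0 1 from rfl,
      show flipAt s 1 1 1 0 = s 1 0 from rfl, show flipAt s 1 1 1 1 = !(s 1 1) from rfl]
    rw [ite_not_sgn]; ring

private lemma sval_dom (x : Fin 2 → Fin 2 → ℝ) (σ τ : Fin 2 → Fin 2 → Bool)
    (hb : ∀ i j, 0 ≤ (if σ i j then (1:ℝ) else -1) * (x i j - 1/4)) :
    Sval x τ ≤ Sval x σ := by
  rw [Sval_eq, Sval_eq]
  have key : ∀ i j, (if τ i j then (1:ℝ) else -1) * (x i j - 1/4)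
      ≤ (if σ i j then (1:ℝ) else -1) * (x i j - 1/4) := by
    intro i j
    have hbij := hb i j
    rcases hτ : τ i j <;> rcases hσ : σ i j <;> rw [hσ] at hbij <;> norm_num at hbij ⊢ <;>
      linarith
  linarith [key 0 0, key 0 1, key 1 0, key 1 1]

private lemma sval_box (x : Fin 2 → Fin 2 → ℝ) (hb : ∀ i j, x i j ∈ Set.Icc (0:ℝ) (1/2))
    (s : Fin 2 → Fin 2 → Bool) : Sval x s ≤ 1 := by
  rw [Sval_eq]
  have key : ∀ i j, (if s i j then (1:ℝ) else -1) * (x i j - 1/4) ≤ 1/4 := by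
    intro i j
    have h1 := (hb i j).1; have h2 := (hb i j).2
    rcases h : s i j <;> norm_num <;> linarith
  linarith [key 0 0, key 0 1, key 1 0, key 1 1]

private noncomputable def phalf : Fin 2 → Fin 2 → ℝ := fun _ _ => 1/2

set_option linter.unnecessarySeqFocus false in
private lemma sval_phalf_odd (s : Fin 2 → Fin 2 → Bool) (hodd : ¬ Even (plusCount s)) :
    Sval phalf s ≤ 1/2 := by
  rw [Sval_eq]
  rw [plusCount_eq] at hodd
  rcases h00 : s 0 0 <;> rcases h01 : s 0 1 <;> rcases h10 : s 1 0 <;> rcases h11 : s 1 1 <;>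
    norm_num [h00, h01, h10, h11, phalf] at hodd <;> norm_num [h00, h01, h10, h11, phalf] <;> exact absurd hodd (by decide)

private lemma sval_phalf_top : Sval phalf (fun _ _ => true) = 1 := by
  rw [Sval_eq]; simp only [phalf]; norm_num

private lemma pc_top : plusCount (fun _ _ => true) = 4 := by decide

private noncomputable def pstar (c : ℝ) : Fin 2 → Fin 2 → ℝ :=
  ![![1/4 + c, 1/4 + c], ![1/4 + c, 1/4]]

private lemma pstar_box (c : ℝ) (h0 : 0 ≤ c) (h1 : c ≤ 1/4) :
    ∀ i j, pstar c i j ∈ Set.Icc (0:ℝ) (1/2) := by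
  intro i j
  fin_cases i <;> fin_cases j <;> simp only [Fin.mk_zero, Fin.mk_one] <;>
    first
    | (rw [show pstar c 0 0 = 1/4 + c from rfl]; constructor <;> [linarith; linarith])
    | (rw [show pstar c 0 1 = 1/4 + c from rfl]; constructor <;> [linarith; linarith])
    | (rw [show pstar c 1 0 = 1/4 + c from rfl]; constructor <;> [linarith; linarith])
    | (rw [show pstar c 1 1 = 1/4 from rfl]; constructor <;> [linarith; linarith])

private lemma sval_pstar_le (c : ℝ) (h0 : 0 ≤ c) (s : Fin 2 → Fin 2 → Bool) :
    Sval (pstar c) s ≤ 3 * c := by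
  rw [Sval_eq]
  rw [show pstar c 0 0 = 1/4 + c from rfl, show pstar c 0 1 = 1/4 + c from rfl,
    show pstar c 1 0 = 1/4 + c from rfl, show pstar c 1 1 = 1/4 from rfl]
  rcases h00 : s 0 0 <;> rcases h01 : s 0 1 <;> rcases h10 : s 1 0 <;> rcases h11 : s 1 1 <;>
    norm_num [h00, h01, h10, h11] <;> linarith

private def s3 : Fin 2 → Fin 2 → Bool := fun i j => ![![true, true], ![true, false]] i j

private lemma pc_s3 : plusCount s3 = 3 := by decide

private lemma sval_pstar_s3 (c : ℝ) : Sval (pstar c) s3 = 3 * c := by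
  rw [Sval_eq]
  rw [show pstar c 0 0 = 1/4 + c from rfl, show pstar c 0 1 = 1/4 + c from rfl,
    show pstar c 1 0 = 1/4 + c from rfl, show pstar c 1 1 = 1/4 from rfl,
    show s3 0 0 = true from rfl, show s3 0 1 = true from rfl,
    show s3 1 0 = true from rfl, show s3 1 1 = false from rfl]
  norm_num
  ring

end EquiQuantAux

/-- the Equi set for the quantum ("quant") constraint:
for every `p ∈ [0,1/2]⁴`, `max S₁p ≤ √2/2 ↔ (p, ε) ∈ ELFP`, iff
`(3 − √2)/2 ∈ S₀ε` and `max S₁ε ≤ 1/2`. -/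
theorem equi_quant
    (ε : Fin 2 → Fin 2 → ℝ)
    (hε : ∀ k i, ε k i ∈ Set.Icc (0 : ℝ) (1 / 2)) :
    (∀ p : Fin 2 → Fin 2 → ℝ, (∀ i j, p i j ∈ Set.Icc (0 : ℝ) (1 / 2)) →
        (maxS1 p ≤ Real.sqrt 2 / 2 ↔ ELFP p ε)) ↔
      (memS0 ε ((3 - Real.sqrt 2) / 2) ∧ maxS1 ε ≤ 1 / 2) := by
  constructor
  · intro H
    have hbph : ∀ i j, phalf i j ∈ Set.Icc (0:ℝ) (1/2) := by
      intro i j; constructor <;> norm_num [phalf]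
    have hm1ph : maxS1 phalf ≤ Real.sqrt 2 / 2 := by
      apply maxS1_le
      intro s hs
      have := sval_phalf_odd s hs
      linarith [sqrt2_gt]
    have hC1 := (key_iff phalf ε hbph hε).1 ((H phalf hbph).1 hm1ph)
    have hM1 : maxS1 ε ≤ 1/2 := by
      apply maxS1_le
      intro t ht
      have hpar : ¬ Even (plusCount (fun _ _ => true) + plusCount t) := by
        rw [pc_top]
        intro hcon
        exact ht ((Nat.even_add.1 hcon).1 (by decide))
      have h := hC1 (fun _ _ => true) t hpar
      rw [sval_phalf_top] at h
      linarith
    -- maxS0 ε ≤ (3 - √2)/2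
    have hc10 : (0:ℝ) ≤ Real.sqrt 2 / 6 := by positivity
    have hc14 : Real.sqrt 2 / 6 ≤ 1/4 := by linarith [sqrt2_lt]
    have hbps := pstar_box (Real.sqrt 2 / 6) hc10 hc14
    have hm1ps : maxS1 (pstar (Real.sqrt 2 / 6)) ≤ Real.sqrt 2 / 2 := by
      apply maxS1_le
      intro s _
      have := sval_pstar_le (Real.sqrt 2 / 6) hc10 s
      linarith
    have hCps := (key_iff (pstar (Real.sqrt 2 / 6)) ε hbps hε).1 ((H _ hbps).1 hm1ps)
    have hM0le : maxS0 ε ≤ (3 - Real.sqrt 2)/2 := by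
      apply maxS0_le
      intro t ht
      have hpar : ¬ Even (plusCount s3 + plusCount t) := by
        rw [pc_s3]
        intro hcon
        exact absurd ((Nat.even_add.1 hcon).2 ht) (by decide)
      have h := hCps s3 t hpar
      rw [sval_pstar_s3] at h
      linarith
    have hM0ge : (3 - Real.sqrt 2)/2 ≤ maxS0 ε := by
      by_contra hlt
      push_neg at hlt
      set z : ℝ := min (3/4) (3/2 - maxS0 ε) with hz
      have hz1 : Real.sqrt 2/2 < z := by
        apply lt_min
        · linarith [sqrt2_lt]
        · linarith
      have hz34 : z ≤ 3/4 := min_le_left _ _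
      have hzM0 : z ≤ 3/2 - maxS0 ε := min_le_right _ _
      have hz30 : (0:ℝ) ≤ z/3 := by
        have : (0:ℝ) < Real.sqrt 2/2 := by linarith [sqrt2_gt]
        linarith
      have hz314 : z/3 ≤ 1/4 := by linarith
      have hbpz := pstar_box (z/3) hz30 hz314
      have hCz : ∀ s t : Fin 2 → Fin 2 → Bool,
          ¬ Even (plusCount s + plusCount t) → Sval (pstar (z/3)) s + Sval ε t ≤ 3/2 := by
        intro s t hst
        have hps := sval_pstar_le (z/3) hz30 s
        rcases parity_split hst with ⟨_, ht⟩ | ⟨_, ht⟩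
        · have := le_trans (le_maxS1 ε t ht) hM1
          linarith
        · have := le_maxS0 ε t ht
          linarith
      have hEz := (key_iff (pstar (z/3)) ε hbpz hε).2 hCz
      have hm1z := (H _ hbpz).2 hEz
      have hge : z ≤ maxS1 (pstar (z/3)) := by
        have hle := le_maxS1 (pstar (z/3)) s3 (by rw [pc_s3]; decide)
        have heq := sval_pstar_s3 (z/3)
        rw [heq] at hle
        linarith
      linarith
    obtain ⟨s₀, hs₀e, hs₀v⟩ := exists_maxS0 ε
    exact ⟨⟨s₀, hs₀e, by rw [hs₀v]; exact le_antisymm hM0le hM0ge⟩, hM1⟩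
  · rintro ⟨⟨σ₀, hσ₀e, hσ₀v⟩, hM1⟩ p hbp
    have hb : ∀ i j, 0 ≤ (if σ₀ i j then (1:ℝ) else -1) * (ε i j - 1/4) := by
      intro i j
      have hle : Sval ε (flipAt σ₀ i j) ≤ 1/2 :=
        le_trans (le_maxS1 ε _ (parity_flip σ₀ i j hσ₀e)) hM1
      rw [sval_flip, hσ₀v] at hle
      linarith [sqrt2_lt]
    have hM0eq : maxS0 ε = (3 - Real.sqrt 2)/2 := by
      apply le_antisymm
      · apply maxS0_le
        intro τ _
        calc Sval ε τ ≤ Sval ε σ₀ := sval_dom ε σ₀ τ hb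
          _ = (3 - Real.sqrt 2)/2 := hσ₀v
      · rw [← hσ₀v]
        exact le_maxS0 ε σ₀ hσ₀e
    rw [key_iff p ε hbp hε]
    constructor
    · intro hm1 s t hst
      rcases parity_split hst with ⟨_, ht⟩ | ⟨hs, ht⟩
      · have h1 := sval_box p hbp s
        have h2 := le_trans (le_maxS1 ε t ht) hM1
        linarith
      · have h1 := le_trans (le_maxS1 p s hs) hm1
        have h2 : Sval ε t ≤ (3 - Real.sqrt 2)/2 := by
          rw [← hM0eq]; exact le_maxS0 ε t ht
        linarith
    · intro hC
      apply maxS1_le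
      intro s hs
      have hpar : ¬ Even (plusCount s + plusCount σ₀) := by
        intro hcon
        exact hs ((Nat.even_add.1 hcon).2 hσ₀e)
      have h := hC s σ₀ hpar
      rw [hσ₀v] at h
      linarith
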